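/- The graded Euler characteristic of the graph cohomology complex C(G) equals the chromatic polynomial of G evaluated at λ = 1+q: Σ_i (-1)^i qdim(C^i(G)) = P_G(1+q). -/

import Mathlib

/-- A finite multigraph (possibly with loops and multiple edges), with
vertex type `V` and edges indexed by `Fin n`, edge `e` having endpoints `ends e`. -/
structure OGraph where
  V : Type
  [finV : Fintype V]
  n : ℕ
  ends : Fin n → Sym2 V

attribute [instance] OGraph.finV

namespace OGraph

variable (G : OGraph)

/-- Two vertices are related if some edge in `s` joins them. -/
def rel (s : Finset (Fin G.n)) (u v : G.V) : Prop := ∃ e ∈ s, G.ends e = s(u, v)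

/-- The set of connected components of the spanning subgraph `[G:s]`. -/
def Comp (s : Finset (Fin G.n)) : Type := Quot (G.rel s)

/-- `k(s)`: the number of connected components of the spanning subgraph `[G:s]`. -/
noncomputable def ncomp (s : Finset (Fin G.n)) : ℕ := Nat.card (G.Comp s)

/-- The number of proper colorings of `G` with `m` colors: the value `P_G(m)` of
the chromatic polynomial at the natural number `m`. -/
noncomputable def chromatic (m : ℕ) : ℕ :=
  Nat.card {c : G.V → Fin m // ∀ e u v, G.ends e = s(u, v) → c u ≠ c v}

end OGraph

namespace OGraph

/-- The map on quotients induced by an implication of relations. -/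
def qmap {V : Type} {r r' : V → V → Prop} (h : ∀ u v, r u v → r' u v) :
    Quot r → Quot r' :=
  Quot.lift (Quot.mk r') fun u v huv => Quot.sound (h u v huv)

variable (G : OGraph)

/-- An enhanced state: a subset `s` of the edges together with an assignment of a
color (`1` or `x`; a component is "colored `x`" when the predicate holds) to each
connected component of the spanning subgraph `[G:s]`. -/
abbrev EState := Σ s : Finset (Fin G.n), (G.Comp s → Prop)

/-- `j(S)`: the number of components colored `x` in the enhanced state `S`. -/
noncomputable def jdeg (S : G.EState) : ℕ := Nat.card {k : G.Comp S.1 // S.2 k}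

open Classical in
/-- The enhanced state(s) obtained from `S` by adding the edge `e`: zero if `e`
already belongs to `S` or if the added edge merges two components both colored `x`
(the product `x∗x = 0`); otherwise the enhanced state on `insert e s` whose
coloring is obtained from that of `S` using the product
`1∗1 = 1`, `1∗x = x∗1 = x`. -/
noncomputable def addEdge (S : G.EState) (e : Fin G.n) : G.EState →₀ ℤ :=
  if e ∈ S.1 then 0
  else
    let p : G.Comp S.1 → G.Comp (insert e S.1) :=
      qmap fun _ _ huv => huv.elim fun f hf => ⟨f, Finset.mem_insert_of_mem hf.1, hf.2⟩
    if ∃ k1 k2 : G.Comp S.1, k1 ≠ k2 ∧ p k1 = p k2 ∧ S.2 k1 ∧ S.2 k2 then 0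
    else Finsupp.single ⟨insert e S.1, fun K => ∃ k, p k = K ∧ S.2 k⟩ 1

/-- The differential applied to a single enhanced state: the signed sum, over all
edges `e` not in `S`, of the states obtained by adding `e`; the sign is `(-1)^{n(e)}`
where `n(e)` is the number of edges of `S` ordered before `e`. -/
noncomputable def dState (S : G.EState) : G.EState →₀ ℤ :=
  ∑ e : Fin G.n, ((-1 : ℤ) ^ (S.1.filter fun f => f < e).card) • G.addEdge S e

/-- The differential of the graph cohomology complex, as a linear endomorphism of
the free `ℤ`-module generated by all enhanced states. -/
noncomputable def diff : (G.EState →₀ ℤ) →ₗ[ℤ] (G.EState →₀ ℤ) :=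
  Finsupp.lsum ℤ fun S => LinearMap.toSpanSingleton ℤ _ (G.dState S)

/-- The chain group `C^{i,j}(G)`: the free `ℤ`-module spanned by the enhanced
states with `i` edges and `j` components colored `x`, as a submodule of the free
module on all enhanced states. -/
noncomputable def Cmod (i j : ℕ) : Submodule ℤ (G.EState →₀ ℤ) :=
  Finsupp.supported ℤ ℤ {S : G.EState | S.1.card = i ∧ G.jdeg S = j}

/-- The cocycles of bidegree `(i,j)`. -/
noncomputable def Zmod (i j : ℕ) : Submodule ℤ (G.EState →₀ ℤ) :=
  LinearMap.ker G.diff ⊓ G.Cmod i j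

/-- The coboundaries: `0` for `i = 0`, the image of `C^{i,j}` for `i + 1`. -/
noncomputable def Bmod : ℕ → ℕ → Submodule ℤ (G.EState →₀ ℤ)
  | 0, _ => ⊥
  | i + 1, j => Submodule.map G.diff (G.Cmod i j)

/-- The graph cohomology group `H^{i,j}(G)` (cocycles modulo coboundaries in
bidegree `(i,j)`). -/
noncomputable def Hmod (i j : ℕ) : Type :=
  (G.Zmod i j).toAddSubgroup ⧸
    (AddSubgroup.comap (G.Zmod i j).toAddSubgroup.subtype (G.Bmod i j).toAddSubgroup)

noncomputable instance (i j : ℕ) : AddCommGroup (G.Hmod i j) := by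
  delta Hmod; infer_instance

end OGraph

namespace OGraph

/-- The graded dimension of the chain group `C^i(G) = ⊕_j C^{i,j}(G)`. -/
noncomputable def qdimC (G : OGraph) (i : ℕ) : PowerSeries ℤ :=
  PowerSeries.mk fun j => (Module.finrank ℤ (G.Cmod i j) : ℤ)

end OGraph


section Aux

open Finset

namespace OGraph

variable (G : OGraph)

instance compFinite (s : Finset (Fin G.n)) : Finite (G.Comp s) := Quot.finite _

/-- lifting equivalence for quotients -/
def quotLiftEquiv {V α : Type} (r : V → V → Prop) :
    (Quot r → α) ≃ {f : V → α // ∀ u v, r u v → f u = f v} where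
  toFun g := ⟨g ∘ Quot.mk r, fun u v h => congrArg g (Quot.sound h)⟩
  invFun f := Quot.lift f.1 f.2
  left_inv g := funext fun q => Quot.inductionOn q fun _ => rfl
  right_inv f := rfl

lemma card_rel_invariant (s : Finset (Fin G.n)) (m : ℕ) :
    Nat.card {c : G.V → Fin m // ∀ e ∈ s, ∀ u v, G.ends e = s(u, v) → c u = c v}
      = m ^ G.ncomp s := by
  have h1 : {c : G.V → Fin m // ∀ e ∈ s, ∀ u v, G.ends e = s(u, v) → c u = c v}
      ≃ {c : G.V → Fin m // ∀ u v, G.rel s u v → c u = c v} := by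
    apply Equiv.subtypeEquivRight
    intro c
    constructor
    · rintro h u v ⟨e, he, hev⟩
      exact h e he u v hev
    · intro h e he u v hev
      exact h u v ⟨e, he, hev⟩
  rw [Nat.card_congr (h1.trans (quotLiftEquiv (G.rel s)).symm), Nat.card_fun,
    Nat.card_eq_fintype_card (α := Fin m), Fintype.card_fin]
  rfl

lemma mono_empty_iff (c : G.V → Fin m) [DecidablePred fun e => ∀ u v, G.ends e = s(u, v) → c u = c v] :
    (univ.filter fun e => ∀ u v, G.ends e = s(u, v) → c u = c v) = ∅ ↔
      ∀ e u v, G.ends e = s(u, v) → c u ≠ c v := by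
  simp only [Finset.eq_empty_iff_forall_notMem, Finset.mem_filter, Finset.mem_univ, true_and]
  constructor
  · intro h e u v hev hc
    apply h e
    intro u' v' hev'
    rw [hev] at hev'
    rcases Sym2.eq_iff.mp hev' with ⟨h1, h2⟩ | ⟨h1, h2⟩
    · rw [← h1, ← h2]; exact hc
    · rw [← h1, ← h2]; exact hc.symm
  · intro h e he
    obtain ⟨u, v, huv⟩ : ∃ u v, G.ends e = s(u, v) :=
      Sym2.exists.mp ⟨G.ends e, rfl⟩
    exact h e u v huv (he u v huv)

/-- Whitney's theorem: inclusion-exclusion formula for the chromatic polynomial. -/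
lemma whitney (m : ℕ) :
    (G.chromatic m : ℤ) =
      ∑ s ∈ (univ : Finset (Fin G.n)).powerset, (-1 : ℤ) ^ s.card * (m : ℤ) ^ G.ncomp s := by
  classical
  set Mono : (G.V → Fin m) → Finset (Fin G.n) :=
    fun c => univ.filter fun e => ∀ u v, G.ends e = s(u, v) → c u = c v with hMono
  have key : ∀ s : Finset (Fin G.n),
      ((m : ℤ)) ^ G.ncomp s = ∑ c : G.V → Fin m, if s ⊆ Mono c then (1 : ℤ) else 0 := by
    intro s
    have hcard : {c : G.V → Fin m // ∀ e ∈ s, ∀ u v, G.ends e = s(u, v) → c u = c v}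
        ≃ {c : G.V → Fin m // s ⊆ Mono c} := by
      apply Equiv.subtypeEquivRight
      intro c
      simp only [hMono, Finset.subset_iff, Finset.mem_filter, Finset.mem_univ, true_and]
    have h2 : ((univ : Finset (G.V → Fin m)).filter fun c => s ⊆ Mono c).card
        = m ^ G.ncomp s := by
      rw [← Fintype.card_subtype, ← Nat.card_eq_fintype_card, ← Nat.card_congr hcard,
        G.card_rel_invariant]
    rw [Finset.sum_boole, h2]
    push_cast
    rfl
  have hchrom : (G.chromatic m : ℤ) =
      ∑ c : G.V → Fin m, if (∀ e u v, G.ends e = s(u, v) → c u ≠ c v) then (1 : ℤ) else 0 := by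
    rw [chromatic, Nat.card_eq_fintype_card, Fintype.card_subtype, Finset.card_filter]
    push_cast
    rfl
  calc (G.chromatic m : ℤ)
      = ∑ c : G.V → Fin m, (if Mono c = ∅ then (1 : ℤ) else 0) := by
        rw [hchrom]
        refine Finset.sum_congr rfl fun c _ => ?_
        exact (if_congr (G.mono_empty_iff c) rfl rfl).symm
    _ = ∑ c : G.V → Fin m, ∑ t ∈ (univ : Finset (Fin G.n)).powerset,
          (-1 : ℤ) ^ t.card * (if t ⊆ Mono c then (1 : ℤ) else 0) := by
        refine Finset.sum_congr rfl fun c _ => ?_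
        have hfil : ((univ : Finset (Fin G.n)).powerset.filter fun t => t ⊆ Mono c)
            = (Mono c).powerset := by
          ext t
          simp [Finset.mem_powerset, Finset.subset_univ]
        simp only [mul_ite, mul_one, mul_zero]
        rw [← Finset.sum_filter, hfil, Finset.sum_powerset_neg_one_pow_card]
    _ = ∑ t ∈ (univ : Finset (Fin G.n)).powerset, (-1 : ℤ) ^ t.card *
          (m : ℤ) ^ G.ncomp t := by
        rw [Finset.sum_comm]
        refine Finset.sum_congr rfl fun t _ => ?_
        rw [key t, Finset.mul_sum]

lemma card_colorings_with (s : Finset (Fin G.n)) (j : ℕ) :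
    Nat.card {f : G.Comp s → Prop // Nat.card {k // f k} = j} = (G.ncomp s).choose j := by
  classical
  letI : Fintype (G.Comp s) := Fintype.ofFinite _
  have e : {f : G.Comp s → Prop // Nat.card {k // f k} = j} ≃
      {T : Finset (G.Comp s) // T.card = j} :=
    { toFun := fun f => ⟨univ.filter fun k => f.1 k, by
        rw [← Fintype.card_subtype, ← Nat.card_eq_fintype_card]; exact f.2⟩
      invFun := fun T => ⟨fun k => k ∈ T.1, by
        rw [Nat.card_eq_fintype_card]; simpa [Fintype.card_coe] using T.2⟩
      left_inv := fun f => Subtype.ext (funext fun k => by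
        simp only [Finset.mem_filter, Finset.mem_univ, true_and])
      right_inv := fun T => Subtype.ext (by ext k; simp) }
  rw [Nat.card_congr e, Nat.card_eq_fintype_card, Fintype.card_finset_len, ncomp,
    Nat.card_eq_fintype_card]

/-- decompose the states of bidegree `(i,j)` -/
def estateSubtypeEquiv (i j : ℕ) :
    {S : G.EState // S.1.card = i ∧ G.jdeg S = j} ≃
      Σ s : {s : Finset (Fin G.n) // s.card = i},
        {f : G.Comp s.1 → Prop // Nat.card {k // f k} = j} where
  toFun S := ⟨⟨S.1.1, S.2.1⟩, ⟨S.1.2, S.2.2⟩⟩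
  invFun x := ⟨⟨x.1.1, x.2.1⟩, x.1.2, x.2.2⟩
  left_inv := fun ⟨⟨s, f⟩, h⟩ => rfl
  right_inv := fun ⟨⟨s, hs⟩, ⟨f, hf⟩⟩ => rfl

lemma card_Cstates (i j : ℕ) :
    Nat.card {S : G.EState // S.1.card = i ∧ G.jdeg S = j} =
      ∑ s ∈ powersetCard i (univ : Finset (Fin G.n)), (G.ncomp s).choose j := by
  classical
  letI : ∀ s : {s : Finset (Fin G.n) // s.card = i},
      Fintype {f : G.Comp s.1 → Prop // Nat.card {k // f k} = j} :=
    fun s => Fintype.ofFinite _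
  rw [Nat.card_congr (G.estateSubtypeEquiv i j), Nat.card_eq_fintype_card,
    Fintype.card_sigma]
  rw [Finset.sum_subtype (powersetCard i (univ : Finset (Fin G.n)))
    (fun s => Finset.mem_powersetCard_univ) (fun s => (G.ncomp s).choose j)]
  refine Finset.sum_congr rfl fun s _ => ?_
  rw [← Nat.card_eq_fintype_card, G.card_colorings_with]

set_option maxHeartbeats 1000000 in
lemma finrank_Cmod (i j : ℕ) :
    Module.finrank ℤ (G.Cmod i j) =
      Nat.card {S : G.EState // S.1.card = i ∧ G.jdeg S = j} := by
  classical
  letI : Fintype {S : G.EState | S.1.card = i ∧ G.jdeg S = j} := Fintype.ofFinite _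
  rw [Cmod, (Finsupp.supportedEquivFinsupp _).finrank_eq,
    (Finsupp.linearEquivFunOnFinite ℤ ℤ _).finrank_eq, Module.finrank_pi,
    ← Nat.card_eq_fintype_card]
  rfl

lemma coeff_one_add_X_pow_ps (k j : ℕ) :
    (PowerSeries.coeff j) ((1 + PowerSeries.X : PowerSeries ℤ) ^ k) = (k.choose j : ℤ) := by
  have h : ((1 + Polynomial.X : Polynomial ℤ) : PowerSeries ℤ) = 1 + PowerSeries.X := by
    simp
  rw [← h, ← Polynomial.coe_pow, Polynomial.coeff_coe, Polynomial.coeff_one_add_X_pow]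

lemma qdimC_eq (i : ℕ) :
    G.qdimC i = ∑ s ∈ powersetCard i (univ : Finset (Fin G.n)),
      (1 + PowerSeries.X : PowerSeries ℤ) ^ G.ncomp s := by
  ext j
  rw [qdimC, PowerSeries.coeff_mk, map_sum, finrank_Cmod, card_Cstates]
  push_cast
  exact Finset.sum_congr rfl fun s _ => (coeff_one_add_X_pow_ps (G.ncomp s) j).symm

end OGraph

end Aux

/-- the graded Euler characteristic of the graph cohomology
complex `C(G)` equals the chromatic polynomial of `G` evaluated at `λ = 1 + q`:
for any polynomial `p` whose value at every natural number `m` is the number of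
proper `m`-colorings of `G` (i.e. `p` is the chromatic polynomial of `G`),
`Σ_i (-1)^i qdim(C^i(G)) = p(1 + q)` as power series in `q`. -/
theorem graded_euler_char_eq_chromatic (G : OGraph) (p : Polynomial ℤ)
    (hp : ∀ m : ℕ, p.eval (m : ℤ) = (G.chromatic m : ℤ)) :
    ∑ i ∈ Finset.range (G.n + 1), (-1 : PowerSeries ℤ) ^ i * G.qdimC i =
      p.eval₂ (PowerSeries.C : ℤ →+* PowerSeries ℤ) (1 + PowerSeries.X) := by
  classical
  -- the Whitney polynomial
  set W : Polynomial ℤ := ∑ s ∈ (Finset.univ : Finset (Fin G.n)).powerset,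
    Polynomial.C ((-1 : ℤ) ^ s.card) * Polynomial.X ^ G.ncomp s with hWdef
  have hWeval : ∀ m : ℕ, W.eval (m : ℤ) = (G.chromatic m : ℤ) := by
    intro m
    rw [G.whitney m, hWdef]
    simp [Polynomial.eval_finset_sum]
  have hpW : p = W := by
    have hsub : p - W = 0 := by
      apply Polynomial.eq_zero_of_infinite_isRoot
      apply Set.Infinite.mono (s := Set.range (Nat.cast : ℕ → ℤ))
      · rintro x ⟨m, rfl⟩
        simp [Polynomial.IsRoot, hp m, hWeval m]
      · exact Set.infinite_range_of_injective Nat.cast_injective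
    linear_combination (norm := ring_nf) hsub
  have hRHS : p.eval₂ (PowerSeries.C : ℤ →+* PowerSeries ℤ) (1 + PowerSeries.X) =
      ∑ s ∈ (Finset.univ : Finset (Fin G.n)).powerset,
        (PowerSeries.C : ℤ →+* PowerSeries ℤ) ((-1 : ℤ) ^ s.card) * (1 + PowerSeries.X) ^ G.ncomp s := by
    rw [hpW, hWdef, Polynomial.eval₂_finset_sum]
    refine Finset.sum_congr rfl fun s _ => ?_
    rw [Polynomial.eval₂_mul, Polynomial.eval₂_C, Polynomial.eval₂_pow, Polynomial.eval₂_X]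
  rw [hRHS]
  have hcu : (Finset.univ : Finset (Fin G.n)).card = G.n := by simp
  rw [Finset.powerset_card_disjiUnion]; erw [Finset.sum_disjiUnion]; rw [hcu]
  refine Finset.sum_congr rfl fun i _ => ?_
  rw [G.qdimC_eq i, Finset.mul_sum]
  refine Finset.sum_congr rfl fun s hs => ?_
  rw [(Finset.mem_powersetCard_univ.mp hs : s.card = i)]
  congr 1
  rw [map_pow, map_neg, map_one]
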